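/- Let 𝔄 be a finite-dimensional associative algebra over ℂ and F ∈ 𝔄* a linear functional such that dim Stab_F(0) ≤ dim Stab_G(0) for all G ∈ 𝔄*. Then Stab_F(0)·Stab_F(∞) = {0}; in particular, Nil_F is a subalgebra of 𝔄 with identically zero multiplication. -/

import Mathlib

open Module Polynomial


/-- `Stab_F(0) = {a : ∀ x, F(ax) = 0}` -/
def stabZero {A : Type*} [NonUnitalRing A] [Module ℂ A]
    [SMulCommClass ℂ A A] [IsScalarTower ℂ A A]
    (F : Module.Dual ℂ A) : Submodule ℂ A where
  carrier := {a | ∀ x : A, F (a * x) = 0}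
  add_mem' := by
    intro a b ha hb x
    simp [add_mul, ha x, hb x]
  zero_mem' := by intro x; simp
  smul_mem' := by
    intro c a ha x
    simp [smul_mul_assoc, ha x]

/-- `Stab_F(∞) = {a : ∀ x, F(xa) = 0}` -/
def stabInf {A : Type*} [NonUnitalRing A] [Module ℂ A]
    [SMulCommClass ℂ A A] [IsScalarTower ℂ A A]
    (F : Module.Dual ℂ A) : Submodule ℂ A where
  carrier := {a | ∀ x : A, F (x * a) = 0}
  add_mem' := by
    intro a b ha hb x
    simp [mul_add, ha x, hb x]
  zero_mem' := by intro x; simp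
  smul_mem' := by
    intro c a ha x
    simp [mul_smul_comm, ha x]



/-- Perturbation of a linearly independent family stays independent for some `t ≠ 0`. -/
lemma exists_ne_zero_linearIndependent_perturb {W : Type*} [AddCommGroup W] [Module ℂ W]
    {k : ℕ} {c d : Fin k → W} (hc : LinearIndependent ℂ c) :
    ∃ t : ℂ, t ≠ 0 ∧ LinearIndependent ℂ (fun i => c i + t • d i) := by
  classical
  -- coordinate functional P with P (c i) = the i-th coordinate function
  let b : Basis (Fin k) ℂ (Submodule.span ℂ (Set.range c)) := Basis.span hc
  obtain ⟨P, hP⟩ := LinearMap.exists_extend (b.equivFun.toLinearMap)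
  have hPc : ∀ i j, P (c i) j = if i = j then 1 else 0 := by
    intro i j
    have h1 : ((Submodule.span ℂ (Set.range c)).subtype) (b i) = c i := congrArg Subtype.val (Basis.span_apply hc i)
    have h2 : P (c i) = b.equivFun (b i) := by
      rw [← h1]; exact LinearMap.congr_fun hP (b i)
    rw [h2, Basis.equivFun_self]
  set B : Matrix (Fin k) (Fin k) ℂ := Matrix.of fun i j => P (d j) i with hB
  -- the polynomial det(1 + X B)
  set Mp : Matrix (Fin k) (Fin k) ℂ[X] :=
    Matrix.of (fun i j => (if i = j then 1 else 0) + X * C (B i j)) with hMp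
  set p : ℂ[X] := Mp.det with hp
  have hev : ∀ t : ℂ, p.eval t = ((1 : Matrix (Fin k) (Fin k) ℂ) + t • B).det := by
    intro t
    have hmap : Mp.map (eval t) = (1 : Matrix (Fin k) (Fin k) ℂ) + t • B := by
      ext i j
      simp [hMp, Matrix.map_apply, Matrix.add_apply, Matrix.smul_apply, Matrix.one_apply,
        apply_ite (eval t), smul_eq_mul, mul_comm t]
    have h := RingHom.map_det (evalRingHom t) Mp
    rw [hp]
    simpa [hmap] using h
  have hp0 : p ≠ 0 := by
    intro h
    have := hev 0
    rw [h] at this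
    simp at this
  have hq : (X * p : ℂ[X]) ≠ 0 := mul_ne_zero X_ne_zero hp0
  obtain ⟨t, ht⟩ := ((Polynomial.finite_setOf_isRoot hq).infinite_compl).nonempty
  have htr : (X * p).eval t ≠ 0 := ht
  have ht0 : t ≠ 0 := by
    intro h; apply htr; simp [h]
  have hdet : ((1 : Matrix (Fin k) (Fin k) ℂ) + t • B).det ≠ 0 := by
    rw [← hev t]
    intro h; apply htr; simp [h]
  refine ⟨t, ht0, ?_⟩
  rw [Fintype.linearIndependent_iff]
  intro g hg
  have hterm : ∀ i j, P (c j + t • d j) i = ((1 : Matrix (Fin k) (Fin k) ℂ) + t • B) i j := by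
    intro i j
    have h1 : P (c j + t • d j) i = (if j = i then (1:ℂ) else 0) + t * P (d j) i := by
      simp [map_add, map_smul, hPc j i]
    rw [h1]
    simp [Matrix.add_apply, Matrix.one_apply, Matrix.smul_apply, smul_eq_mul, hB]
    congr 1
    exact propext eq_comm
  have hmv : ((1 : Matrix (Fin k) (Fin k) ℂ) + t • B).mulVec g = 0 := by
    funext i
    have hgi : P (∑ j, g j • (c j + t • d j)) i = 0 := by rw [hg]; simp
    rw [map_sum] at hgi
    simp only [map_smul, Finset.sum_apply, Pi.smul_apply, smul_eq_mul] at hgi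
    simp only [Matrix.mulVec, dotProduct, Pi.zero_apply]
    rw [← hgi]
    refine Finset.sum_congr rfl fun j _ => ?_
    rw [hterm i j, mul_comm]
  have := Matrix.eq_zero_of_mulVec_eq_zero hdet hmv
  intro i; rw [this]; rfl

/-- If `rank (T + t S) ≤ rank T` for all `t`, then `S (ker T) ⊆ range T`. -/
lemma smul_ker_le_range {V W : Type*} [AddCommGroup V] [Module ℂ V]
    [AddCommGroup W] [Module ℂ W] [FiniteDimensional ℂ W]
    (T S : V →ₗ[ℂ] W)
    (h : ∀ t : ℂ, finrank ℂ (LinearMap.range (T + t • S)) ≤ finrank ℂ (LinearMap.range T))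
    {v : V} (hv : T v = 0) : S v ∈ LinearMap.range T := by
  classical
  by_contra hS
  set r := finrank ℂ (LinearMap.range T) with hr
  let bR : Basis (Fin r) ℂ (LinearMap.range T) := finBasis ℂ (LinearMap.range T)
  have hmem : ∀ i, (bR i : W) ∈ LinearMap.range T := fun i => (bR i).2
  choose u hu using hmem
  -- the unperturbed family
  set c : Fin (r + 1) → W := Fin.cons (S v) (fun i => (bR i : W)) with hcdef
  set d : Fin (r + 1) → W := Fin.cons 0 (fun i => S (u i)) with hddef
  have hspan : Submodule.span ℂ (Set.range fun i => ((bR i : W))) = LinearMap.range T := by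
    have : (fun i => (bR i : W)) = (LinearMap.range T).subtype ∘ bR := rfl
    rw [this, Set.range_comp, Submodule.span_image, bR.span_eq, Submodule.map_subtype_top]
  have hindep : LinearIndependent ℂ c := by
    rw [hcdef, linearIndependent_fin_cons]
    constructor
    · exact bR.linearIndependent.map' (LinearMap.range T).subtype
        (Submodule.ker_subtype _)
    · rw [hspan]; exact hS
  obtain ⟨t, ht0, hind⟩ := exists_ne_zero_linearIndependent_perturb (d := d) hindep
  -- all perturbed vectors lie in range (T + t • S)
  have hmem' : ∀ i, c i + t • d i ∈ LinearMap.range (T + t • S) := by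
    intro i
    refine Fin.cases ?_ ?_ i
    · -- S v + t • 0 = S v = t⁻¹ • ((T + t•S) v)
      have h1 : (T + t • S) v = t • S v := by simp [hv]
      have h2 : c 0 + t • d 0 = S v := by simp [hcdef, hddef]
      rw [h2]
      refine ⟨t⁻¹ • v, ?_⟩
      rw [map_smul, h1, smul_smul, inv_mul_cancel₀ ht0, one_smul]
    · intro i
      have h2 : c i.succ + t • d i.succ = (T + t • S) (u i) := by
        simp [hcdef, hddef, hu i]
      rw [h2]
      exact ⟨u i, rfl⟩
  have hle : Submodule.span ℂ (Set.range fun i => c i + t • d i) ≤ LinearMap.range (T + t • S) := by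
    rw [Submodule.span_le]
    rintro x ⟨i, rfl⟩
    exact hmem' i
  have hcard : finrank ℂ (Submodule.span ℂ (Set.range fun i => c i + t • d i)) = r + 1 := by
    rw [finrank_span_eq_card hind, Fintype.card_fin]
  have := Submodule.finrank_mono hle
  rw [hcard] at this
  have := h t
  omega

/-- The map `a ↦ (x ↦ G (a * x))` as a linear map `A →ₗ Dual A`. -/
def psiMap {A : Type*} [NonUnitalRing A] [Module ℂ A]
    [SMulCommClass ℂ A A] [IsScalarTower ℂ A A]
    (G : Module.Dual ℂ A) : A →ₗ[ℂ] Module.Dual ℂ A where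
  toFun a := G.comp (LinearMap.mulLeft ℂ a)
  map_add' a b := by ext x; simp [add_mul]
  map_smul' c a := by ext x; simp [smul_mul_assoc]

lemma psiMap_apply {A : Type*} [NonUnitalRing A] [Module ℂ A]
    [SMulCommClass ℂ A A] [IsScalarTower ℂ A A]
    (G : Module.Dual ℂ A) (a x : A) : psiMap G a x = G (a * x) := rfl

lemma ker_psiMap {A : Type*} [NonUnitalRing A] [Module ℂ A]
    [SMulCommClass ℂ A A] [IsScalarTower ℂ A A]
    (G : Module.Dual ℂ A) : LinearMap.ker (psiMap G) = stabZero G := by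
  ext a
  simp only [LinearMap.mem_ker]
  constructor
  · intro h x
    have := LinearMap.congr_fun h x
    simpa [psiMap_apply] using this
  · intro h
    ext x
    simpa [psiMap_apply] using h x

/-- If `F` minimizes `dim Stab_G(0)` over all `G ∈ 𝔄*`, then
`Stab_F(0) · Stab_F(∞) = {0}`; in particular `Nil_F = Stab_F(0) ⊓ Stab_F(∞)` is a
subalgebra with identically zero multiplication. -/
theorem stmt12 {A : Type*} [NonUnitalRing A] [Module ℂ A]
    [SMulCommClass ℂ A A] [IsScalarTower ℂ A A] [FiniteDimensional ℂ A]
    (F : Module.Dual ℂ A)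
    (hmin : ∀ G : Module.Dual ℂ A,
      Module.finrank ℂ ↥(stabZero F) ≤ Module.finrank ℂ ↥(stabZero G)) :
    (∀ a ∈ stabZero F, ∀ b ∈ stabInf F, a * b = 0) ∧
    (∀ a ∈ stabZero F ⊓ stabInf F, ∀ b ∈ stabZero F ⊓ stabInf F, a * b = 0) := by
  have main : ∀ a ∈ stabZero F, ∀ b ∈ stabInf F, a * b = 0 := by
    intro a ha b hb
    rw [← Module.forall_dual_apply_eq_zero_iff ℂ (a * b)]
    intro H
    -- rank condition for T = psiMap F, S = psiMap H
    have hrank : ∀ t : ℂ, finrank ℂ (LinearMap.range (psiMap F + t • psiMap H))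
        ≤ finrank ℂ (LinearMap.range (psiMap F)) := by
      intro t
      have hsum : psiMap F + t • psiMap H = psiMap (F + t • H) := by
        ext c x
        simp [psiMap_apply]
      have h1 := LinearMap.finrank_range_add_finrank_ker (psiMap F)
      have h2 := LinearMap.finrank_range_add_finrank_ker (psiMap (F + t • H))
      have h3 : finrank ℂ (LinearMap.ker (psiMap F)) ≤
          finrank ℂ (LinearMap.ker (psiMap (F + t • H))) := by
        rw [ker_psiMap, ker_psiMap]
        exact hmin (F + t • H)
      rw [hsum]
      omega
    have hvker : psiMap F a = 0 := by
      rw [← LinearMap.mem_ker, ker_psiMap]; exact ha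
    obtain ⟨c, hc⟩ := smul_ker_le_range (psiMap F) (psiMap H) hrank hvker
    have := LinearMap.congr_fun hc b
    rw [psiMap_apply, psiMap_apply] at this
    rw [← this]
    exact hb c
  exact ⟨main, fun a ha b hb => main a ha.1 b hb.2⟩
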